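/- In the compressed M&M game with both players starting at k M&M's, the probability of a tie can be written as P(tie) = ∑_{n=0}^{k-1} C(2k-n-2, n) · C(2k-2n-2, k-n-1) · (1/3)^{2k-n-1}, and each summand is the probability that the game ends in a tie with exactly n double-eat moves before the final move. -/

import Mathlib

open MeasureTheory ProbabilityTheory ENNReal

section MMTieAux

open Finset

namespace MMTie

abbrev V : Finset (ℕ × ℕ) := {(1,1),(1,0),(0,1)}

def ext {m : ℕ} (f : Fin m → ℕ × ℕ) (i : ℕ) : ℕ × ℕ :=
  if h : i < m then f ⟨i, h⟩ else (0,0)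

lemma ext_lt {m : ℕ} (f : Fin m → ℕ × ℕ) {i : ℕ} (h : i < m) :
    ext f i = f ⟨i, h⟩ := dif_pos h

/-- forced length: N + (#double moves) = 2k-2. -/
lemma sum_eq (k N : ℕ) (hk : 1 ≤ k) (g : ℕ → ℕ × ℕ)
    (hg : ∀ i < N, g i ∈ V)
    (hsum : (∑ i ∈ Finset.range N, g i) = (k-1, k-1)) :
    N + ((Finset.range N).filter fun i => g i = (1,1)).card = 2*k - 2 ∧
    ((Finset.range N).filter fun i => g i = (1,1)).card ≤ k - 1 := by
  have h1 : ∑ i ∈ Finset.range N, (g i).1 = k - 1 := by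
    rw [← Prod.fst_sum, hsum]
  have h2 : ∑ i ∈ Finset.range N, (g i).2 = k - 1 := by
    rw [← Prod.snd_sum, hsum]
  have key : ∀ i ∈ Finset.range N,
      (g i).1 + (g i).2 = 1 + (if g i = (1,1) then 1 else 0) := by
    intro i hi
    have hv := hg i (Finset.mem_range.1 hi)
    simp only [V, Finset.mem_insert, Finset.mem_singleton] at hv
    rcases hv with h|h|h <;> rw [h] <;> decide
  have hcard : ((Finset.range N).filter fun i => g i = (1,1)).card
      = ∑ i ∈ Finset.range N, (if g i = (1,1) then 1 else 0) := by
    rw [Finset.card_filter]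
  have hsum2 : ∑ i ∈ Finset.range N, ((g i).1 + (g i).2)
      = N + ((Finset.range N).filter fun i => g i = (1,1)).card := by
    rw [Finset.sum_congr rfl key, Finset.sum_add_distrib, hcard]
    simp
  rw [Finset.sum_add_distrib, h1, h2] at hsum2
  constructor
  · omega
  · have hle : ∀ i ∈ Finset.range N,
        (if g i = (1,1) then 1 else 0) ≤ (g i).1 := by
      intro i hi
      split_ifs with h
      · rw [h]
      · exact Nat.zero_le _
    have := Finset.sum_le_sum hle
    rw [← hcard, h1] at this
    exact this

lemma N_lt {k : ℕ} (g : ℕ → ℕ × ℕ) {N N' : ℕ} (hNN : N < N')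
    (h1 : (∑ i ∈ Finset.range N, g i) = (k-1,k-1)) (h2 : g N = (1,1))
    (h1' : (∑ i ∈ Finset.range N', g i) = (k-1,k-1)) : False := by
  have hmono : ∑ i ∈ Finset.range (N+1), (g i).1 ≤ ∑ i ∈ Finset.range N', (g i).1 :=
    Finset.sum_le_sum_of_subset (Finset.range_subset_range.2 hNN)
  rw [Finset.sum_range_succ] at hmono
  have e1 : ∑ i ∈ Finset.range N, (g i).1 = k - 1 := by rw [← Prod.fst_sum, h1]
  have e2 : ∑ i ∈ Finset.range N', (g i).1 = k - 1 := by rw [← Prod.fst_sum, h1']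
  rw [e1, e2, h2] at hmono
  omega

lemma N_unique {k : ℕ} (g : ℕ → ℕ × ℕ) {N N' : ℕ}
    (h1 : (∑ i ∈ Finset.range N, g i) = (k-1,k-1)) (h2 : g N = (1,1))
    (h1' : (∑ i ∈ Finset.range N', g i) = (k-1,k-1)) (h2' : g N' = (1,1)) :
    N = N' := by
  rcases lt_trichotomy N N' with h | h | h
  · exact absurd (N_lt g h h1 h2 h1') (by simp)
  · exact h
  · exact absurd (N_lt g h h1' h2' h1) (by simp)


/-- The set of length-`m` paths witnessing a tie with `n` double moves. -/
def Tn (k n m : ℕ) : Finset (Fin m → ℕ × ℕ) :=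
  (Fintype.piFinset fun _ => V).filter fun f =>
    (∑ i ∈ Finset.range (2*k-2-n), ext f i) = (k-1, k-1) ∧ ext f (2*k-2-n) = (1,1) ∧
    ((Finset.range (2*k-2-n)).filter fun i => ext f i = (1,1)).card = n

lemma Tn_subset (k n m : ℕ) :
    Tn k n m ⊆ Fintype.piFinset (fun _ : Fin m => V) := Finset.filter_subset _ _

lemma conds_of (k n N : ℕ) (g h : ℕ → ℕ × ℕ) (heq : ∀ i ≤ N, g i = h i)
    (hc : (∑ i ∈ Finset.range N, g i) = (k-1,k-1) ∧ g N = (1,1) ∧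
      ((Finset.range N).filter fun i => g i = (1,1)).card = n) :
    (∑ i ∈ Finset.range N, h i) = (k-1,k-1) ∧ h N = (1,1) ∧
      ((Finset.range N).filter fun i => h i = (1,1)).card = n := by
  obtain ⟨c1, c2, c3⟩ := hc
  have e1 : ∑ i ∈ Finset.range N, h i = ∑ i ∈ Finset.range N, g i :=
    Finset.sum_congr rfl fun i hi => (heq i (le_of_lt (Finset.mem_range.1 hi))).symm
  have e3 : (Finset.range N).filter (fun i => h i = (1,1))
      = (Finset.range N).filter (fun i => g i = (1,1)) :=
    Finset.filter_congr fun i hi => by rw [heq i (le_of_lt (Finset.mem_range.1 hi))]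
  exact ⟨e1.trans c1, (heq N le_rfl) ▸ c2, e3 ▸ c3⟩

lemma fin_card_trans (M : ℕ) (p : ℕ → Prop) [DecidablePred p] :
    ((Finset.range M).filter p).card = (Finset.univ.filter (fun i : Fin M => p i)).card := by
  rw [Finset.card_filter, Finset.card_filter,
    ← Fin.sum_univ_eq_sum_range (fun i => if p i then 1 else 0) M]

lemma mem_Tn {k n m : ℕ} {f : Fin m → ℕ × ℕ} :
    f ∈ Tn k n m ↔ (∀ i, f i ∈ V) ∧
      (∑ i ∈ Finset.range (2*k-2-n), ext f i) = (k-1, k-1) ∧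
      ext f (2*k-2-n) = (1,1) ∧
      ((Finset.range (2*k-2-n)).filter fun i => ext f i = (1,1)).card = n := by
  simp [Tn, Fintype.mem_piFinset, and_assoc]

/-- build a path from the positions of double moves and of `(1,0)` moves. -/
def mkf (M : ℕ) (A B : Finset (Fin M)) : Fin (M+1) → ℕ × ℕ :=
  fun x => if h : (x:ℕ) < M then
    (if (⟨(x:ℕ), h⟩ : Fin M) ∈ A then (1,1)
     else if (⟨(x:ℕ), h⟩ : Fin M) ∈ B then (1,0) else (0,1)) else (1,1)

lemma mkf_ext_lt {M : ℕ} (A B : Finset (Fin M)) {i0 : ℕ} (h : i0 < M) :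
    ext (mkf M A B) i0 = (if (⟨i0, h⟩ : Fin M) ∈ A then (1,1)
      else if (⟨i0, h⟩ : Fin M) ∈ B then (1,0) else (0,1)) := by
  rw [ext_lt _ (by omega : i0 < M+1)]
  simp [mkf, h]

lemma mkf_ext_fin {M : ℕ} (A B : Finset (Fin M)) (i : Fin M) :
    ext (mkf M A B) (i : ℕ) = (if i ∈ A then (1,1)
      else if i ∈ B then (1,0) else (0,1)) := by
  rw [mkf_ext_lt A B i.isLt]

lemma mkf_ext_last {M : ℕ} (A B : Finset (Fin M)) : ext (mkf M A B) M = (1,1) := by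
  rw [ext_lt _ (Nat.lt_succ_self M)]
  simp [mkf]

lemma ext_eq_self {M : ℕ} (f : Fin (M+1) → ℕ × ℕ) (x : Fin (M+1)) :
    ext f (x : ℕ) = f x := by
  rw [ext_lt f x.isLt]

lemma card_Tn (k n m : ℕ) (hk : 1 ≤ k) (hn : n < k) (hm : m = (2*k-2-n)+1) :
    (Tn k n m).card = (2*k-n-2).choose n * (2*k-2*n-2).choose (k-n-1) := by
  classical
  subst hm
  set M := 2*k-2-n with hM
  have hnk : n ≤ k - 1 := by omega
  set X : Finset (Σ _ : Finset (Fin M), Finset (Fin M)) :=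
    (Finset.univ.powersetCard n).sigma
      (fun A => ((Finset.univ \ A).powersetCard (k-1-n))) with hX
  have cardX : X.card = (2*k-n-2).choose n * (2*k-2*n-2).choose (k-n-1) := by
    rw [hX, Finset.card_sigma]
    have h1 : ∀ A ∈ (Finset.univ : Finset (Fin M)).powersetCard n,
        (((Finset.univ \ A).powersetCard (k-1-n)) :
          Finset (Finset (Fin M))).card = (2*k-2*n-2).choose (k-n-1) := by
      intro A hA
      obtain ⟨hA1, hA2⟩ := Finset.mem_powersetCard.1 hA
      rw [Finset.card_powersetCard, Finset.card_sdiff_of_subset (Finset.subset_univ A), hA2,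
        Finset.card_univ, Fintype.card_fin]
      congr 1 <;> omega
    rw [Finset.sum_congr rfl h1, Finset.sum_const, Finset.card_powersetCard,
      Finset.card_univ, Fintype.card_fin, smul_eq_mul]
    congr 2
    omega
  rw [← cardX]
  refine Finset.card_bij'
    (fun f _ => (⟨Finset.univ.filter (fun i : Fin M => ext f (i:ℕ) = (1,1)),
                 Finset.univ.filter (fun i : Fin M => ext f (i:ℕ) = (1,0))⟩ :
                 Σ _ : Finset (Fin M), Finset (Fin M)))
    (fun p _ => mkf M p.1 p.2) ?_ ?_ ?_ ?_
  · -- forward map lands in X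
    intro f hf
    obtain ⟨hfV, c1, c2, c3⟩ := mem_Tn.1 hf
    rw [← hM] at c1 c2 c3
    have hext : ∀ i < M, ext f i ∈ V := by
      intro i hi
      rw [ext_lt f (by omega)]
      exact hfV _
    have h1 : ∑ i ∈ Finset.range M, (ext f i).1 = k-1 := by
      rw [← Prod.fst_sum, c1]
    have hterm : ∀ i ∈ Finset.range M, (ext f i).1 =
        (if ext f i = (1,1) then 1 else 0) + (if ext f i = (1,0) then 1 else 0) := by
      intro i hi
      have hv := hext i (Finset.mem_range.1 hi)
      simp only [V, Finset.mem_insert, Finset.mem_singleton] at hv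
      rcases hv with h|h|h <;> rw [h] <;> decide
    have h2 : (k-1 : ℕ) = ((Finset.range M).filter fun i => ext f i = (1,1)).card
        + ((Finset.range M).filter fun i => ext f i = (1,0)).card := by
      rw [← h1, Finset.sum_congr rfl hterm, Finset.sum_add_distrib,
        Finset.card_filter, Finset.card_filter]
    refine Finset.mem_sigma.2 ⟨?_, ?_⟩
    · refine Finset.mem_powersetCard.2 ⟨Finset.subset_univ _, ?_⟩
      exact (fin_card_trans M (fun j => ext f j = (1,1))).symm.trans c3
    · refine Finset.mem_powersetCard.2 ⟨?_, ?_⟩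
      · intro i hi
        simp only [Finset.mem_filter, Finset.mem_univ, true_and] at hi
        simp only [Finset.mem_sdiff, Finset.mem_univ, true_and, Finset.mem_filter]
        rw [hi]
        decide
      · show (Finset.univ.filter fun i : Fin M => ext f (i:ℕ) = (1,0)).card = k-1-n
        rw [← fin_card_trans M (fun j => ext f j = (1,0))]
        omega
  · -- backward map lands in Tn
    intro p hp
    simp only [hX, Finset.mem_sigma, Finset.mem_powersetCard] at hp
    obtain ⟨A, B⟩ := p
    obtain ⟨⟨-, hA2⟩, hB1, hB2⟩ := hp
    have hdisj : ∀ i : Fin M, i ∈ B → i ∉ A := by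
      intro i hi
      have := hB1 hi
      simp only [Finset.mem_sdiff] at this
      exact this.2
    dsimp only
    have hfst : ∑ i : Fin M, (ext (mkf M A B) (i:ℕ)).1 = k - 1 := by
      have hterm : ∀ i : Fin M, (ext (mkf M A B) (i:ℕ)).1
          = if i ∈ A ∪ B then 1 else 0 := by
        intro i
        rw [mkf_ext_fin]
        by_cases h1 : i ∈ A
        · simp [h1]
        · by_cases h2 : i ∈ B <;> simp [h1, h2]
      rw [Finset.sum_congr rfl (fun i _ => hterm i), ← Finset.card_filter,
        Finset.filter_univ_mem, Finset.card_union_of_disjoint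
          (Finset.disjoint_left.2 fun a ha hb => hdisj a hb ha), hA2, hB2]
      omega
    have hsnd : ∑ i : Fin M, (ext (mkf M A B) (i:ℕ)).2 = k - 1 := by
      have hterm : ∀ i : Fin M, (ext (mkf M A B) (i:ℕ)).2
          = if i ∉ B then 1 else 0 := by
        intro i
        rw [mkf_ext_fin]
        by_cases h2 : i ∈ B
        · simp [h2, hdisj i h2]
        · by_cases h1 : i ∈ A <;> simp [h1, h2]
      rw [Finset.sum_congr rfl (fun i _ => hterm i), ← Finset.card_filter,
        Finset.filter_not, Finset.filter_univ_mem,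
        Finset.card_sdiff_of_subset (Finset.subset_univ B), hB2,
        Finset.card_univ, Fintype.card_fin]
      omega
    refine mem_Tn.2 ⟨?_, ?_, ?_, ?_⟩
    · intro x
      unfold mkf
      split_ifs <;> decide
    · have hsum : ∑ i ∈ Finset.range M, ext (mkf M A B) i
          = ∑ i : Fin M, ext (mkf M A B) (i:ℕ) :=
        (Fin.sum_univ_eq_sum_range _ M).symm
      rw [hsum, Prod.ext_iff, Prod.fst_sum, Prod.snd_sum]
      exact ⟨hfst, hsnd⟩
    · exact mkf_ext_last A B
    · rw [fin_card_trans]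
      have : Finset.univ.filter (fun i : Fin M => ext (mkf M A B) (i:ℕ) = (1,1)) = A := by
        ext i
        simp only [Finset.mem_filter, Finset.mem_univ, true_and, mkf_ext_fin]
        split_ifs with h1 h2 <;> simp [h1, Prod.ext_iff]
      rw [this, hA2]
  · -- left inverse
    intro f hf
    obtain ⟨hfV, c1, c2, c3⟩ := mem_Tn.1 hf
    rw [← hM] at c1 c2 c3
    funext x
    dsimp only
    by_cases hx : (x:ℕ) < M
    · rw [← ext_eq_self (mkf M _ _) x, mkf_ext_lt _ _ hx]
      simp only [Finset.mem_filter, Finset.mem_univ, true_and]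
      have hxe : ext f (((⟨(x:ℕ), hx⟩ : Fin M)) : ℕ) = f x := by
        rw [ext_lt f (by omega)]
      rw [hxe]
      have hv := hfV x
      simp only [V, Finset.mem_insert, Finset.mem_singleton] at hv
      rcases hv with h|h|h <;> simp [h, Prod.ext_iff]
    · have hxM : (x:ℕ) = M := by omega
      have h2 : ext f (x : ℕ) = f x := ext_eq_self f x
      rw [← ext_eq_self (mkf M _ _) x, hxM, mkf_ext_last, ← h2, hxM, c2]
  · -- right inverse
    intro p hp
    simp only [hX, Finset.mem_sigma, Finset.mem_powersetCard] at hp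
    obtain ⟨A, B⟩ := p
    obtain ⟨⟨-, hA2⟩, hB1, hB2⟩ := hp
    have hdisj : ∀ i : Fin M, i ∈ B → i ∉ A := by
      intro i hi
      have := hB1 hi
      simp only [Finset.mem_sdiff] at this
      exact this.2
    dsimp only
    have e1 : Finset.univ.filter (fun i : Fin M => ext (mkf M A B) (i:ℕ) = (1,1)) = A := by
      ext i
      simp only [Finset.mem_filter, Finset.mem_univ, true_and, mkf_ext_fin]
      split_ifs with h1 h2 <;> simp [h1, Prod.ext_iff]
    have e2 : Finset.univ.filter (fun i : Fin M => ext (mkf M A B) (i:ℕ) = (1,0)) = B := by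
      ext i
      simp only [Finset.mem_filter, Finset.mem_univ, true_and, mkf_ext_fin]
      split_ifs with h1 h2
      · simp [Prod.ext_iff, show i ∉ B from fun hB => hdisj i hB h1]
      · simp [h2]
      · simp [h2, Prod.ext_iff]
    exact Sigma.ext e1 (heq_of_eq e2)

variable {Ω : Type*} [MeasureSpace Ω] [IsProbabilityMeasure (ℙ : Measure Ω)]

lemma cylMeasure (S : ℕ → Ω → ℕ × ℕ)
    (hrange : ∀ n ω, S n ω ∈ ({(1, 1), (1, 0), (0, 1)} : Set (ℕ × ℕ)))
    (hiid : ∀ n : ℕ, ∀ f : Fin n → ℕ × ℕ,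
      (∀ i, f i ∈ ({(1, 1), (1, 0), (0, 1)} : Set (ℕ × ℕ))) →
      ℙ {ω | ∀ i : Fin n, S i ω = f i} = (1 / 3) ^ n)
    (m : ℕ) (T : Finset (Fin m → ℕ × ℕ))
    (hT : T ⊆ Fintype.piFinset fun _ => V) :
    ℙ {ω | ∃ f ∈ T, ∀ i : Fin m, S i ω = f i} = T.card * (1/3)^m := by
  classical
  set F : Finset (Fin m → ℕ × ℕ) := Fintype.piFinset fun _ => V with hF
  have hmemV : ∀ f ∈ F, ∀ i, f i ∈ ({(1, 1), (1, 0), (0, 1)} : Set (ℕ × ℕ)) := by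
    intro f hf i
    have := Fintype.mem_piFinset.1 hf i
    simpa [V] using this
  set C : (Fin m → ℕ × ℕ) → Set Ω := fun f => {ω | ∀ i : Fin m, S i ω = f i} with hC
  have hmeas : ∀ f ∈ F, ℙ (C f) = (1/3)^m := fun f hf => hiid m f (hmemV f hf)
  have hbound : ∀ T' : Finset (Fin m → ℕ × ℕ), T' ⊆ F →
      ℙ (⋃ f ∈ T', C f) ≤ T'.card * (1/3)^m := by
    intro T' hT'
    calc ℙ (⋃ f ∈ T', C f) ≤ ∑ f ∈ T', ℙ (C f) := measure_biUnion_finset_le T' C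
    _ = ∑ f ∈ T', (1/3 : ℝ≥0∞)^m := Finset.sum_congr rfl fun f hf => hmeas f (hT' hf)
    _ = T'.card * (1/3)^m := by rw [Finset.sum_const, nsmul_eq_mul]
  have hcover : (Set.univ : Set Ω) ⊆ (⋃ f ∈ T, C f) ∪ (⋃ f ∈ F \ T, C f) := by
    intro ω _
    set f : Fin m → ℕ × ℕ := fun i => S i ω with hfdef
    have hfF : f ∈ F := by
      refine Fintype.mem_piFinset.2 fun i => ?_
      have := hrange i ω
      simpa [V] using this
    have hfC : ω ∈ C f := fun i => rfl
    by_cases h : f ∈ T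
    · exact Or.inl (Set.mem_biUnion h hfC)
    · exact Or.inr (Set.mem_biUnion (Finset.mem_sdiff.2 ⟨hfF, h⟩) hfC)
  have hcardF : (F.card : ℝ≥0∞) * (1/3)^m = 1 := by
    have : F.card = 3^m := by
      rw [hF, Fintype.card_piFinset_const]
      rfl
    rw [this]
    push_cast
    rw [one_div, ← mul_pow, ENNReal.mul_inv_cancel (by norm_num) (by norm_num), one_pow]
  have hsplit : (T.card : ℝ≥0∞) * (1/3)^m + ((F \ T).card : ℝ≥0∞) * (1/3)^m = 1 := by
    rw [← add_mul, ← Nat.cast_add, Finset.card_sdiff_of_subset hT]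
    rw [← Nat.add_sub_assoc (Finset.card_le_card hT), Nat.add_sub_cancel_left]
    exact hcardF
  have hone : (1 : ℝ≥0∞) ≤ ℙ (⋃ f ∈ T, C f) + ℙ (⋃ f ∈ F \ T, C f) := by
    calc (1 : ℝ≥0∞) = ℙ (Set.univ : Set Ω) := (measure_univ).symm
    _ ≤ ℙ ((⋃ f ∈ T, C f) ∪ (⋃ f ∈ F \ T, C f)) := measure_mono hcover
    _ ≤ _ := measure_union_le _ _
  have hEq : {ω | ∃ f ∈ T, ∀ i : Fin m, S i ω = f i} = ⋃ f ∈ T, C f := by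
    ext ω; simp [hC]
  rw [hEq]
  refine le_antisymm (hbound T hT) ?_
  have h2 : ℙ (⋃ f ∈ F \ T, C f) ≤ ((F \ T).card : ℝ≥0∞) * (1/3)^m :=
    hbound _ (Finset.sdiff_subset)
  have hfin : ((F \ T).card : ℝ≥0∞) * (1/3)^m ≠ ∞ := by
    apply ENNReal.mul_ne_top (by simp)
    exact ENNReal.pow_ne_top (by norm_num)
  have : (T.card : ℝ≥0∞) * (1/3)^m = 1 - ((F \ T).card : ℝ≥0∞) * (1/3)^m :=
    ENNReal.eq_sub_of_add_eq hfin hsplit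
  rw [this, tsub_le_iff_right]
  calc (1 : ℝ≥0∞) ≤ ℙ (⋃ f ∈ T, C f) + ℙ (⋃ f ∈ F \ T, C f) := hone
  _ ≤ ℙ (⋃ f ∈ T, C f) + ((F \ T).card : ℝ≥0∞) * (1/3)^m := by gcongr


lemma event_eq (S : ℕ → Ω → ℕ × ℕ)
    (hrange : ∀ n ω, S n ω ∈ ({(1, 1), (1, 0), (0, 1)} : Set (ℕ × ℕ)))
    (k n m : ℕ) (hk : 1 ≤ k) (hm : 2*k-2-n < m) :
    {ω | ∃ N : ℕ, (∑ i ∈ Finset.range N, S i ω) = (k - 1, k - 1) ∧ S N ω = (1, 1) ∧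
        ((Finset.range N).filter fun i => S i ω = (1, 1)).card = n}
    = {ω | ∃ f ∈ Tn k n m, ∀ i : Fin m, S i ω = f i} := by
  ext ω
  simp only [Set.mem_setOf_eq]
  constructor
  · rintro ⟨N, c1, c2, c3⟩
    have hrg : ∀ i < N, S i ω ∈ V := by
      intro i _
      simpa [V] using hrange i ω
    have hNn := sum_eq k N hk (fun j => S j ω) hrg c1
    beta_reduce at hNn
    have hN : N = 2*k-2-n := by omega
    subst hN
    refine ⟨fun i : Fin m => S (i:ℕ) ω, ?_, fun i => rfl⟩
    have heq : ∀ i ≤ 2*k-2-n, S i ω = ext (fun j : Fin m => S (j:ℕ) ω) i := by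
      intro i hi
      rw [ext_lt _ (lt_of_le_of_lt hi hm)]
    exact mem_Tn.2 ⟨fun i => by simpa [V] using hrange (i:ℕ) ω,
      conds_of k n _ _ _ heq ⟨c1, c2, c3⟩⟩
  · rintro ⟨f, hf, hSf⟩
    obtain ⟨hfV, c1, c2, c3⟩ := mem_Tn.1 hf
    have heq : ∀ i ≤ 2*k-2-n, ext f i = S i ω := by
      intro i hi
      rw [ext_lt f (lt_of_le_of_lt hi hm)]
      exact (hSf ⟨i, lt_of_le_of_lt hi hm⟩).symm
    exact ⟨2*k-2-n, conds_of k n _ _ _ heq ⟨c1, c2, c3⟩⟩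

lemma event_union (S : ℕ → Ω → ℕ × ℕ)
    (hrange : ∀ n ω, S n ω ∈ ({(1, 1), (1, 0), (0, 1)} : Set (ℕ × ℕ)))
    (k : ℕ) (hk : 1 ≤ k) :
    {ω | ∃ N : ℕ, (∑ i ∈ Finset.range N, S i ω) = (k - 1, k - 1) ∧ S N ω = (1, 1)}
    = ⋃ n ∈ Finset.range k,
        {ω | ∃ N : ℕ, (∑ i ∈ Finset.range N, S i ω) = (k - 1, k - 1) ∧ S N ω = (1, 1) ∧
          ((Finset.range N).filter fun i => S i ω = (1, 1)).card = n} := by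
  ext ω
  simp only [Set.mem_setOf_eq, Set.mem_iUnion, Finset.mem_range, exists_prop]
  constructor
  · rintro ⟨N, c1, c2⟩
    refine ⟨((Finset.range N).filter fun i => S i ω = (1,1)).card, ?_, N, c1, c2, rfl⟩
    have hrg : ∀ i < N, S i ω ∈ V := fun i _ => by simpa [V] using hrange i ω
    have := sum_eq k N hk (fun j => S j ω) hrg c1
    beta_reduce at this
    omega
  · rintro ⟨n, -, N, c1, c2, -⟩
    exact ⟨N, c1, c2⟩

lemma Tn_disj (k : ℕ) (hk : 1 ≤ k) {n n' m : ℕ} (hn : n < k) (hn' : n' < k)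
    (hne : n ≠ n') : Disjoint (Tn k n m) (Tn k n' m) := by
  rw [Finset.disjoint_left]
  intro f hf hf'
  obtain ⟨-, c1, c2, -⟩ := mem_Tn.1 hf
  obtain ⟨-, c1', c2', -⟩ := mem_Tn.1 hf'
  have := N_unique (ext f) c1 c2 c1' c2'
  omega

end MMTie

end MMTieAux

/-- In the compressed M&M game (each round one of: both eat `(1,1)`, only player 1
eats `(1,0)`, only player 2 eats `(0,1)`, each with probability `1/3`,
independently), starting from `(0,0)` and counting eaten M&M's up to `k` each, the
tie probability is `∑_{n=0}^{k-1} C(2k-n-2,n) C(2k-2n-2,k-n-1) (1/3)^{2k-n-1}`,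
and the summand for `n` is the probability of a tie with exactly `n` double-eat
moves before the final (double-eat) move. -/
theorem compressed_game_tie_prob {Ω : Type*} [MeasureSpace Ω]
    [IsProbabilityMeasure (ℙ : Measure Ω)] (k : ℕ) (hk : 1 ≤ k)
    (S : ℕ → Ω → ℕ × ℕ)
    (hrange : ∀ n ω, S n ω ∈ ({(1, 1), (1, 0), (0, 1)} : Set (ℕ × ℕ)))
    (hiid : ∀ n : ℕ, ∀ f : Fin n → ℕ × ℕ,
      (∀ i, f i ∈ ({(1, 1), (1, 0), (0, 1)} : Set (ℕ × ℕ))) →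
      ℙ {ω | ∀ i : Fin n, S i ω = f i} = (1 / 3) ^ n) :
    ℙ {ω | ∃ N : ℕ, (∑ i ∈ Finset.range N, S i ω) = (k - 1, k - 1) ∧
        S N ω = (1, 1)} =
      ∑ n ∈ Finset.range k,
        ((2 * k - n - 2).choose n : ℝ≥0∞) * ((2 * k - 2 * n - 2).choose (k - n - 1)) *
          (1 / 3) ^ (2 * k - n - 1) ∧
    ∀ n ∈ Finset.range k,
      ℙ {ω | ∃ N : ℕ, (∑ i ∈ Finset.range N, S i ω) = (k - 1, k - 1) ∧
          S N ω = (1, 1) ∧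
          ((Finset.range N).filter fun i => S i ω = (1, 1)).card = n} =
        ((2 * k - n - 2).choose n : ℝ≥0∞) * ((2 * k - 2 * n - 2).choose (k - n - 1)) *
          (1 / 3) ^ (2 * k - n - 1) := by
    classical
  open MMTie in
  -- the per-`n` events
  set E : ℕ → Set Ω := fun n =>
    {ω | ∃ N : ℕ, (∑ i ∈ Finset.range N, S i ω) = (k - 1, k - 1) ∧
      S N ω = (1, 1) ∧
      ((Finset.range N).filter fun i => S i ω = (1, 1)).card = n} with hE
  have hEn : ∀ n, n < k → ℙ (E n) =
      ((2 * k - n - 2).choose n : ℝ≥0∞) * ((2 * k - 2 * n - 2).choose (k - n - 1)) *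
        (1 / 3) ^ (2 * k - n - 1) := by
    intro n hn
    simp only [hE]
    rw [MMTie.event_eq S hrange k n (2*k-n-1) hk (by omega),
      MMTie.cylMeasure S hrange hiid _ _ (MMTie.Tn_subset k n (2*k-n-1)),
      MMTie.card_Tn k n _ hk hn (by omega)]
    push_cast
    ring
  refine ⟨?_, fun n hn => hEn n (Finset.mem_range.1 hn)⟩
  have hEnL : ∀ n ∈ Finset.range k, ℙ (E n) =
      ((MMTie.Tn k n (2*k-1)).card : ℝ≥0∞) * (1/3)^(2*k-1) := by
    intro n hn
    simp only [hE]
    rw [MMTie.event_eq S hrange k n (2*k-1) hk (by omega),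
      MMTie.cylMeasure S hrange hiid _ _ (MMTie.Tn_subset k n (2*k-1))]
  set R : Finset (Fin (2*k-1) → ℕ × ℕ) :=
    (Fintype.piFinset fun _ => MMTie.V) \
      (Finset.range k).biUnion (fun n => MMTie.Tn k n (2*k-1)) with hR
  set CR : Set Ω := {ω | ∃ f ∈ R, ∀ i : Fin (2*k-1), S i ω = f i} with hCR
  have hCRm : ℙ CR = (R.card : ℝ≥0∞) * (1/3)^(2*k-1) :=
    MMTie.cylMeasure S hrange hiid _ _ Finset.sdiff_subset
  rw [MMTie.event_union S hrange k hk]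
  show ℙ (⋃ n ∈ Finset.range k, E n) = _
  have upper : ℙ (⋃ n ∈ Finset.range k, E n) ≤ ∑ n ∈ Finset.range k, ℙ (E n) :=
    measure_biUnion_finset_le _ _
  have hcover : (Set.univ : Set Ω) ⊆ (⋃ n ∈ Finset.range k, E n) ∪ CR := by
    intro ω _
    set f : Fin (2*k-1) → ℕ × ℕ := fun i => S (i:ℕ) ω with hf
    have hfF : f ∈ Fintype.piFinset fun _ : Fin (2*k-1) => MMTie.V := by
      refine Fintype.mem_piFinset.2 fun i => ?_
      simpa [MMTie.V] using hrange (i:ℕ) ω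
    by_cases hmem : f ∈ (Finset.range k).biUnion (fun n => MMTie.Tn k n (2*k-1))
    · obtain ⟨n, hn, hfTn⟩ := Finset.mem_biUnion.1 hmem
      refine Or.inl (Set.mem_biUnion hn ?_)
      simp only [hE]
      rw [MMTie.event_eq S hrange k n (2*k-1) hk (by omega)]
      exact ⟨f, hfTn, fun i => rfl⟩
    · exact Or.inr ⟨f, Finset.mem_sdiff.2 ⟨hfF, hmem⟩, fun i => rfl⟩
  have hsum_card : (∑ n ∈ Finset.range k, (MMTie.Tn k n (2*k-1)).card) + R.card
      = 3^(2*k-1) := by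
    have hdis : ∀ x ∈ Finset.range k, ∀ y ∈ Finset.range k, x ≠ y →
        Disjoint (MMTie.Tn k x (2*k-1)) (MMTie.Tn k y (2*k-1)) := by
      intro x hx y hy hxy
      exact MMTie.Tn_disj k hk (Finset.mem_range.1 hx) (Finset.mem_range.1 hy) hxy
    have hbu := Finset.card_biUnion hdis
    have hsub : (Finset.range k).biUnion (fun n => MMTie.Tn k n (2*k-1)) ⊆
        Fintype.piFinset fun _ : Fin (2*k-1) => MMTie.V :=
      Finset.biUnion_subset.2 fun n _ => MMTie.Tn_subset k n (2*k-1)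
    have hcsd : R.card = (Fintype.piFinset fun _ : Fin (2*k-1) => MMTie.V).card
        - ((Finset.range k).biUnion (fun n => MMTie.Tn k n (2*k-1))).card :=
      Finset.card_sdiff_of_subset hsub
    have hle := Finset.card_le_card hsub
    have hpfc : (Fintype.piFinset fun _ : Fin (2*k-1) => MMTie.V).card = 3^(2*k-1) := by
      rw [Fintype.card_piFinset_const]
      rfl
    omega
  have key : (∑ n ∈ Finset.range k, ℙ (E n)) + ℙ CR = 1 := by
    rw [Finset.sum_congr rfl hEnL, hCRm, ← Finset.sum_mul, ← add_mul, ← Nat.cast_sum,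
      ← Nat.cast_add, hsum_card]
    push_cast
    rw [one_div, ← mul_pow, ENNReal.mul_inv_cancel (by norm_num) (by norm_num), one_pow]
  have hone : (1:ℝ≥0∞) ≤ ℙ (⋃ n ∈ Finset.range k, E n) + ℙ CR := by
    calc (1:ℝ≥0∞) = ℙ (Set.univ : Set Ω) := measure_univ.symm
    _ ≤ ℙ ((⋃ n ∈ Finset.range k, E n) ∪ CR) := measure_mono hcover
    _ ≤ _ := measure_union_le _ _
  have lower : ∑ n ∈ Finset.range k, ℙ (E n) ≤ ℙ (⋃ n ∈ Finset.range k, E n) := by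
    rw [← ENNReal.add_le_add_iff_right (measure_ne_top ℙ CR), key]
    exact hone
  rw [le_antisymm upper lower]
  exact Finset.sum_congr rfl fun n hn => hEn n (Finset.mem_range.1 hn)
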